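/- arXiv:2605.10003 — 4 statements merged into one kernel-verified Lean document; each statement's English description precedes it below -/
import Mathlib

section
/- A finite family of density matrices (ρ₁,…,ρₙ) is set incoherent (simultaneously unitarily diagonalizable) if and only if Tr(ρᵢ²ρⱼ²) = Tr(ρᵢρⱼρᵢρⱼ) for all i < j. -/
open Matrix ComplexOrder

lemma aux_zero_of_trace {n : Type*} [Fintype n] {C : Matrix n n ℂ}
    (h : trace (Cᴴ * C) = 0) : C = 0 := by
  have h2 : ∑ k : n, ∑ i : n, Complex.normSq (C i k) = 0 := by
    have h1 : trace (Cᴴ * C) = ((∑ k : n, ∑ i : n, Complex.normSq (C i k) : ℝ) : ℂ) := by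
      simp [Matrix.trace, Matrix.diag, Matrix.mul_apply, Matrix.conjTranspose_apply,
        ← Complex.normSq_eq_conj_mul_self]
    rw [h1] at h
    exact_mod_cast h
  ext i j
  have := (Finset.sum_eq_zero_iff_of_nonneg (fun k _ => Finset.sum_nonneg
    (fun i _ => Complex.normSq_nonneg _))).mp h2 j (Finset.mem_univ _)
  have := (Finset.sum_eq_zero_iff_of_nonneg (fun i _ => Complex.normSq_nonneg _)).mp this i
    (Finset.mem_univ _)
  simpa using Complex.normSq_eq_zero.mp this

lemma aux_commute {d : ℕ} {A B : Matrix (Fin d) (Fin d) ℂ}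
    (hA : A.IsHermitian) (hB : B.IsHermitian)
    (h : trace (A ^ 2 * B ^ 2) = trace (A * B * A * B)) : Commute A B := by
  set C := A * B - B * A with hC
  have hCs : Cᴴ = -C := by
    simp [hC, conjTranspose_sub, conjTranspose_mul, hA.eq, hB.eq]
  have c1 : trace (A * B * (B * A)) = trace (A ^ 2 * B ^ 2) := by
    rw [show A * B * (B * A) = (A * B * B) * A by noncomm_ring, trace_mul_comm]
    congr 1; noncomm_ring
  have c2 : trace (B * A * (A * B)) = trace (A ^ 2 * B ^ 2) := by
    rw [show B * A * (A * B) = B * (A * A * B) by noncomm_ring, trace_mul_comm]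
    congr 1; noncomm_ring
  have c3 : trace (B * A * (B * A)) = trace (A * B * A * B) := by
    rw [show B * A * (B * A) = B * (A * B * A) by noncomm_ring, trace_mul_comm]
  have c4 : trace (A * B * (A * B)) = trace (A * B * A * B) := by
    congr 1; noncomm_ring
  have htr : trace (Cᴴ * C) = 0 := by
    rw [hCs]
    simp only [hC, Matrix.neg_mul, trace_neg, Matrix.mul_sub, Matrix.sub_mul, trace_sub]
    rw [c1, c2, c3, c4]
    rw [h]; ring
  have := aux_zero_of_trace htr
  have : A * B - B * A = 0 := this
  rw [sub_eq_zero] at this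
  exact this


lemma aux_basis {E : Type*} [NormedAddCommGroup E] [InnerProductSpace ℂ E]
    [FiniteDimensional ℂ E] {n d : ℕ} (hd : Module.finrank ℂ E = d)
    (T : Fin n → E →ₗ[ℂ] E) (hsymm : ∀ i, (T i).IsSymmetric)
    (hcomm : Pairwise (Function.onFun Commute T)) :
    ∃ b : OrthonormalBasis (Fin d) ℂ E, ∀ a i, ∃ μ : ℂ, T i (b a) = μ • b a := by
  classical
  set V : (Fin n → ℂ) → Submodule ℂ E :=
    fun χ => ⨅ i, Module.End.eigenspace (T i) (χ i) with hV
  have hofam := LinearMap.IsSymmetric.orthogonalFamily_iInf_eigenspaces hsymm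
  have hfin : {χ : Fin n → ℂ | V χ ≠ ⊥}.Finite :=
    WellFoundedGT.finite_ne_bot_of_iSupIndep hofam.independent
  haveI : Fintype {χ : Fin n → ℂ // V χ ≠ ⊥} := hfin.fintype
  have hofam' : OrthogonalFamily ℂ
      (fun γ : {χ : Fin n → ℂ // V χ ≠ ⊥} => ↥(V γ.1))
      (fun γ => (V γ.1).subtypeₗᵢ) := hofam.comp Subtype.val_injective
  have htopfull : ⨆ χ : Fin n → ℂ, V χ = ⊤ :=
    LinearMap.IsSymmetric.iSup_iInf_eq_top_of_commute hsymm hcomm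
  have htop : ⨆ γ : {χ : Fin n → ℂ // V χ ≠ ⊥}, V γ.1 = ⊤ := by
    rw [← htopfull]
    refine le_antisymm (iSup_le ?_) (iSup_le ?_)
    · intro γ
      exact le_iSup V γ.1
    · intro χ
      by_cases h : V χ = ⊥
      · simp [h]
      · exact le_iSup (fun γ : {χ : Fin n → ℂ // V χ ≠ ⊥} => V γ.1) ⟨χ, h⟩
  have hint : DirectSum.IsInternal (fun γ : {χ : Fin n → ℂ // V χ ≠ ⊥} => V γ.1) :=
    hofam'.isInternal_iff.mpr (by rw [htop, Submodule.top_orthogonal_eq_bot])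
  refine ⟨hint.subordinateOrthonormalBasis hd hofam', fun a i => ?_⟩
  have hmem := hint.subordinateOrthonormalBasis_subordinate hd a hofam'
  refine ⟨(hint.subordinateOrthonormalBasisIndex hd a hofam').1 i, ?_⟩
  exact Module.End.mem_eigenspace_iff.mp ((Submodule.mem_iInf _).mp hmem i)

lemma aux_simul {d m : ℕ} (ρ : Fin m → Matrix (Fin d) (Fin d) ℂ)
    (hherm : ∀ i, (ρ i).IsHermitian) (hcomm : ∀ i j, Commute (ρ i) (ρ j)) :
    ∃ U ∈ Matrix.unitaryGroup (Fin d) ℂ,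
      ∀ i, ((U : Matrix (Fin d) (Fin d) ℂ) * ρ i * Uᴴ).IsDiag := by
  classical
  set T : Fin m → (EuclideanSpace ℂ (Fin d) →ₗ[ℂ] EuclideanSpace ℂ (Fin d)) :=
    fun i => Matrix.toEuclideanLin (ρ i) with hT
  have hsymm : ∀ i, (T i).IsSymmetric := fun i =>
    (Matrix.isHermitian_iff_isSymmetric).mp (hherm i)
  have hTcomm : Pairwise (Function.onFun Commute T) := by
    intro i j _
    show T i * T j = T j * T i
    have key : ∀ a b : Fin m, T a * T b = Matrix.toEuclideanLin (ρ a * ρ b) := by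
      intro a b
      apply LinearMap.ext
      intro x
      show T a (T b x) = _
      apply (WithLp.equiv 2 (Fin d → ℂ)).injective
      simp [hT, Matrix.ofLp_toEuclideanLin_apply, Matrix.mulVec_mulVec]
    rw [key, key, hcomm i j]
  obtain ⟨b, hb⟩ := aux_basis (finrank_euclideanSpace_fin) T hsymm hTcomm
  have heig : ∀ (a : Fin d) (i : Fin m), ∃ μ : ℂ, ρ i *ᵥ ⇑(b a) = μ • ⇑(b a) := by
    intro a i
    obtain ⟨μ, hμ⟩ := hb a i
    refine ⟨μ, ?_⟩
    funext j
    exact congrFun (congrArg (WithLp.equiv 2 (Fin d → ℂ)) hμ) j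
  set W : Matrix (Fin d) (Fin d) ℂ :=
    (EuclideanSpace.basisFun (Fin d) ℂ).toBasis.toMatrix b.toBasis with hW
  have hWu : W ∈ Matrix.unitaryGroup (Fin d) ℂ :=
    (EuclideanSpace.basisFun (Fin d) ℂ).toMatrix_orthonormalBasis_mem_unitary b
  refine ⟨star W, Unitary.star_mem hWu, ?_⟩
  intro i k l hkl
  have hWa : ∀ j l, W j l = b l j := fun j l => rfl
  have hsW : (star W)ᴴ = W := by simp [Matrix.star_eq_conjTranspose]
  rw [hsW]
  obtain ⟨μ, hμ⟩ := heig l i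
  have hentry : (star W * ρ i * W) k l = μ * ∑ j, (starRingEnd ℂ) (b k j) * b l j := by
    rw [Matrix.mul_assoc, Matrix.mul_apply]
    have hcol : ∀ j, (ρ i * W) j l = μ * b l j := by
      intro j
      rw [Matrix.mul_apply]
      have := congrFun hμ j
      simpa [Matrix.mulVec, dotProduct, hWa, mul_comm] using this
    rw [Finset.mul_sum]
    refine Finset.sum_congr rfl fun j _ => ?_
    rw [hcol j]
    simp [hWa, Matrix.star_apply]
    ring
  have horth : ∑ j, (starRingEnd ℂ) (b k j) * b l j = 0 := by
    have := b.orthonormal.2 hkl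
    simpa [PiLp.inner_apply, RCLike.inner_apply, mul_comm] using this
  show (star W * ρ i * W) k l = 0
  rw [hentry, horth, mul_zero]

theorem stmt6 (d m : ℕ) (ρ : Fin m → Matrix (Fin d) (Fin d) ℂ)
    (hpsd : ∀ i, (ρ i).PosSemidef) (htr : ∀ i, trace (ρ i) = (1 : ℂ)) :
    (∃ U ∈ Matrix.unitaryGroup (Fin d) ℂ,
        ∀ i, ((U : Matrix (Fin d) (Fin d) ℂ) * ρ i * Uᴴ).IsDiag) ↔
      ∀ i j : Fin m, i < j →
        trace (ρ i ^ 2 * ρ j ^ 2) = trace (ρ i * ρ j * ρ i * ρ j) := by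
  constructor
  · rintro ⟨U, hU, hdiag⟩ i j _
    have hUstar : Uᴴ * U = 1 := by
      simpa [Matrix.star_eq_conjTranspose] using (Matrix.mem_unitaryGroup_iff'.mp hU)
    have hrho : ∀ a : Fin m, ρ a = Uᴴ * (U * ρ a * Uᴴ) * U := by
      intro a
      calc ρ a = (Uᴴ * U) * ρ a * (Uᴴ * U) := by rw [hUstar]; noncomm_ring
      _ = Uᴴ * (U * ρ a * Uᴴ) * U := by noncomm_ring
    have hDcomm : (U * ρ i * Uᴴ) * (U * ρ j * Uᴴ) = (U * ρ j * Uᴴ) * (U * ρ i * Uᴴ) := by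
      rw [(hdiag i).diagonal_diag.symm, (hdiag j).diagonal_diag.symm,
        Matrix.diagonal_mul_diagonal, Matrix.diagonal_mul_diagonal]
      exact congrArg diagonal (funext fun x => mul_comm _ _)
    have h : ρ i * ρ j = ρ j * ρ i := by
      rw [hrho i, hrho j]
      calc Uᴴ * (U * ρ i * Uᴴ) * U * (Uᴴ * (U * ρ j * Uᴴ) * U)
          = Uᴴ * ((U * ρ i * Uᴴ) * (U * Uᴴ) * (U * ρ j * Uᴴ)) * U := by noncomm_ring
        _ = Uᴴ * ((U * ρ i * Uᴴ) * (U * ρ j * Uᴴ)) * U := by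
            rw [show U * Uᴴ = 1 by
              simpa [Matrix.star_eq_conjTranspose] using (Matrix.mem_unitaryGroup_iff.mp hU)]
            noncomm_ring
        _ = Uᴴ * ((U * ρ j * Uᴴ) * (U * ρ i * Uᴴ)) * U := by rw [hDcomm]
        _ = Uᴴ * ((U * ρ j * Uᴴ) * (U * Uᴴ) * (U * ρ i * Uᴴ)) * U := by
            rw [show U * Uᴴ = 1 by
              simpa [Matrix.star_eq_conjTranspose] using (Matrix.mem_unitaryGroup_iff.mp hU)]
            noncomm_ring
        _ = Uᴴ * (U * ρ j * Uᴴ) * U * (Uᴴ * (U * ρ i * Uᴴ) * U) := by noncomm_ring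
    have e : ρ i ^ 2 * ρ j ^ 2 = ρ i * ρ j * ρ i * ρ j := by
      conv_rhs => rw [show ρ i * ρ j * ρ i * ρ j = ρ i * (ρ j * ρ i) * ρ j from by noncomm_ring,
        ← h]
      noncomm_ring
    rw [e]
  · intro hTr
    have hherm : ∀ i, (ρ i).IsHermitian := fun i => (hpsd i).1
    have hcomm : ∀ i j, Commute (ρ i) (ρ j) := by
      intro i j
      rcases lt_trichotomy i j with h | h | h
      · exact aux_commute (hherm i) (hherm j) (hTr i j h)
      · rw [h]
      · exact (aux_commute (hherm j) (hherm i) (hTr j i h)).symm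
    exact aux_simul ρ hherm hcomm
end

section
/- Let ρ₀ = diag(1/2, 1/2, 0), σ₀ = diag(1/2, 0, 1/2), ρ₁ = diag(1/2, 1/2, 0), and σ₁ be the 3×3 matrix with rows (1/4, 0, 1/4), (0, 1/4, 0), (1/4, 0, 1/2). Then all four matrices are density matrices, Tr(ρ₀²) = Tr(ρ₁²) = Tr(σ₀²) = Tr(σ₁²) = 1/2, Tr(ρ₀σ₀) = Tr(ρ₁σ₁) = 1/4, ρ₀σ₀ = σ₀ρ₀, but ρ₁σ₁ ≠ σ₁ρ₁. -/
open Matrix ComplexOrder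

noncomputable def ρ₀ : Matrix (Fin 3) (Fin 3) ℂ := !![1/2, 0, 0; 0, 1/2, 0; 0, 0, 0]
noncomputable def σ₀ : Matrix (Fin 3) (Fin 3) ℂ := !![1/2, 0, 0; 0, 0, 0; 0, 0, 1/2]
noncomputable def ρ₁ : Matrix (Fin 3) (Fin 3) ℂ := !![1/2, 0, 0; 0, 1/2, 0; 0, 0, 0]
noncomputable def σ₁ : Matrix (Fin 3) (Fin 3) ℂ := !![1/4, 0, 1/4; 0, 1/4, 0; 1/4, 0, 1/2]

lemma rho0_psd : ρ₀.PosSemidef := by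
  have h : ρ₀ = (!![(1:ℂ)/2, 1/2, 0; 1/2, -(1/2), 0; 0, 0, 0] :
      Matrix (Fin 3) (Fin 3) ℂ)ᴴ * !![(1:ℂ)/2, 1/2, 0; 1/2, -(1/2), 0; 0, 0, 0] := by
    ext i j
    fin_cases i <;> fin_cases j <;>
        simp [Complex.ext_iff, ρ₀, Matrix.mul_apply, Fin.sum_univ_three, Matrix.vecHead, Matrix.vecTail] <;> norm_num
  rw [h]
  exact Matrix.posSemidef_conjTranspose_mul_self _

lemma sigma0_psd : σ₀.PosSemidef := by
  have h : σ₀ = (!![(1:ℂ)/2, 0, 1/2; 1/2, 0, -(1/2); 0, 0, 0] :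
      Matrix (Fin 3) (Fin 3) ℂ)ᴴ * !![(1:ℂ)/2, 0, 1/2; 1/2, 0, -(1/2); 0, 0, 0] := by
    ext i j
    fin_cases i <;> fin_cases j <;>
        simp [Complex.ext_iff, σ₀, Matrix.mul_apply, Fin.sum_univ_three, Matrix.vecHead, Matrix.vecTail] <;> norm_num
  rw [h]
  exact Matrix.posSemidef_conjTranspose_mul_self _

lemma sigma1_psd : σ₁.PosSemidef := by
  have h : σ₁ = (!![(1:ℂ)/2, 0, 1/2; 0, 1/2, 0; 0, 0, 1/2] :
      Matrix (Fin 3) (Fin 3) ℂ)ᴴ * !![(1:ℂ)/2, 0, 1/2; 0, 1/2, 0; 0, 0, 1/2] := by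
    ext i j
    fin_cases i <;> fin_cases j <;>
        simp [Complex.ext_iff, σ₁, Matrix.mul_apply, Fin.sum_univ_three, Matrix.vecHead, Matrix.vecTail] <;> norm_num
  rw [h]
  exact Matrix.posSemidef_conjTranspose_mul_self _

theorem stmt10 :
    (ρ₀.PosSemidef ∧ trace ρ₀ = 1) ∧ (σ₀.PosSemidef ∧ trace σ₀ = 1) ∧
    (ρ₁.PosSemidef ∧ trace ρ₁ = 1) ∧ (σ₁.PosSemidef ∧ trace σ₁ = 1) ∧
    trace (ρ₀ * ρ₀) = 1/2 ∧ trace (ρ₁ * ρ₁) = 1/2 ∧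
    trace (σ₀ * σ₀) = 1/2 ∧ trace (σ₁ * σ₁) = 1/2 ∧
    trace (ρ₀ * σ₀) = 1/4 ∧ trace (ρ₁ * σ₁) = 1/4 ∧
    ρ₀ * σ₀ = σ₀ * ρ₀ ∧ ρ₁ * σ₁ ≠ σ₁ * ρ₁ := by
  refine ⟨⟨rho0_psd, ?_⟩, ⟨sigma0_psd, ?_⟩, ⟨rho0_psd, ?_⟩, ⟨sigma1_psd, ?_⟩,
    ?_, ?_, ?_, ?_, ?_, ?_, ?_, ?_⟩
  · simp [ρ₀, Matrix.trace_fin_three, Matrix.vecHead, Matrix.vecTail]; norm_num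
  · simp [σ₀, Matrix.trace_fin_three, Matrix.vecHead, Matrix.vecTail]; norm_num
  · simp [ρ₁, Matrix.trace_fin_three, Matrix.vecHead, Matrix.vecTail]; norm_num
  · simp [σ₁, Matrix.trace_fin_three, Matrix.vecHead, Matrix.vecTail]; norm_num
  · simp [ρ₀, Matrix.trace_fin_three, Matrix.mul_apply, Fin.sum_univ_three,
      Matrix.vecHead, Matrix.vecTail]; norm_num
  · simp [ρ₁, Matrix.trace_fin_three, Matrix.mul_apply, Fin.sum_univ_three,
      Matrix.vecHead, Matrix.vecTail]; norm_num
  · simp [σ₀, Matrix.trace_fin_three, Matrix.mul_apply, Fin.sum_univ_three,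
      Matrix.vecHead, Matrix.vecTail]; norm_num
  · simp [σ₁, Matrix.trace_fin_three, Matrix.mul_apply, Fin.sum_univ_three,
      Matrix.vecHead, Matrix.vecTail]; norm_num
  · simp [ρ₀, σ₀, Matrix.trace_fin_three, Matrix.mul_apply, Fin.sum_univ_three,
      Matrix.vecHead, Matrix.vecTail]; norm_num
  · simp [ρ₁, σ₁, Matrix.trace_fin_three, Matrix.mul_apply, Fin.sum_univ_three,
      Matrix.vecHead, Matrix.vecTail]; norm_num
  · ext i j
    fin_cases i <;> fin_cases j <;>
      simp [ρ₀, σ₀, Matrix.mul_apply, Fin.sum_univ_three, Matrix.vecHead, Matrix.vecTail]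
  · intro h
    have := congrFun (congrFun h 0) 2
    simp [ρ₁, σ₁, Matrix.mul_apply, Fin.sum_univ_three, Matrix.vecHead, Matrix.vecTail] at this
end

section
/- Suppose ρ is a 3×3 Hermitian matrix with three distinct eigenvalues a₁, a₂, a₃, diagonal in an orthonormal basis, D = diag(d₁, d₂, d₃) in the same basis, and σ is Hermitian satisfying Tr(ρᵏσ) = Tr(ρᵏD) for k = 0, 1, 2 and Tr(σ²) = Tr(D²). Then σ = D, and in particular ρσ = σρ. -/
open Matrix

theorem stmt11 (a d : Fin 3 → ℝ)
    (hdist : Function.Injective a)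
    (ρ D σ : Matrix (Fin 3) (Fin 3) ℂ)
    (hρ : ρ = Matrix.diagonal fun i => (a i : ℂ))
    (hD : D = Matrix.diagonal fun i => (d i : ℂ))
    (hσ : σ.IsHermitian)
    (h0 : trace σ = trace D)
    (h1 : trace (ρ * σ) = trace (ρ * D))
    (h2 : trace (ρ ^ 2 * σ) = trace (ρ ^ 2 * D))
    (h3 : trace (σ ^ 2) = trace (D ^ 2)) :
    σ = D ∧ ρ * σ = σ * ρ := by
  subst hρ hD
  simp only [Matrix.trace, Matrix.diag, Fin.sum_univ_three, Matrix.mul_apply, pow_two,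
    Matrix.diagonal_apply, Fin.reduceEq, reduceIte, ite_mul, mul_ite, zero_mul, mul_zero,
    add_zero, zero_add] at h0 h1 h2 h3
  have ha01 : (a 0 : ℂ) ≠ (a 1 : ℂ) := by
    simpa using fun h => (by decide : (0 : Fin 3) ≠ 1) (hdist h)
  have ha02 : (a 0 : ℂ) ≠ (a 2 : ℂ) := by
    simpa using fun h => (by decide : (0 : Fin 3) ≠ 2) (hdist h)
  have ha12 : (a 1 : ℂ) ≠ (a 2 : ℂ) := by
    simpa using fun h => (by decide : (1 : Fin 3) ≠ 2) (hdist h)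
  -- diagonal entries
  have hd0 : σ 0 0 = (d 0 : ℂ) := by
    have key : (σ 0 0 - (d 0 : ℂ)) * (((a 0 : ℂ) - a 1) * ((a 0 : ℂ) - a 2)) = 0 := by
      linear_combination ((a 1 : ℂ) * a 2) * h0 - ((a 1 : ℂ) + a 2) * h1 + h2
    rcases mul_eq_zero.mp key with h | h
    · exact sub_eq_zero.mp h
    · exact absurd h (mul_ne_zero (sub_ne_zero.mpr ha01) (sub_ne_zero.mpr ha02))
  have hd1 : σ 1 1 = (d 1 : ℂ) := by
    have key : (σ 1 1 - (d 1 : ℂ)) * (((a 1 : ℂ) - a 0) * ((a 1 : ℂ) - a 2)) = 0 := by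
      linear_combination ((a 0 : ℂ) * a 2) * h0 - ((a 0 : ℂ) + a 2) * h1 + h2
    rcases mul_eq_zero.mp key with h | h
    · exact sub_eq_zero.mp h
    · exact absurd h (mul_ne_zero (sub_ne_zero.mpr ha01.symm) (sub_ne_zero.mpr ha12))
  have hd2 : σ 2 2 = (d 2 : ℂ) := by
    have key : (σ 2 2 - (d 2 : ℂ)) * (((a 2 : ℂ) - a 0) * ((a 2 : ℂ) - a 1)) = 0 := by
      linear_combination ((a 0 : ℂ) * a 1) * h0 - ((a 0 : ℂ) + a 1) * h1 + h2
    rcases mul_eq_zero.mp key with h | h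
    · exact sub_eq_zero.mp h
    · exact absurd h (mul_ne_zero (sub_ne_zero.mpr ha02.symm) (sub_ne_zero.mpr ha12.symm))
  -- Hermitian relations
  have e10 : σ 1 0 = (starRingEnd ℂ) (σ 0 1) := by
    rw [← hσ.apply 1 0, Complex.star_def]
  have e20 : σ 2 0 = (starRingEnd ℂ) (σ 0 2) := by
    rw [← hσ.apply 2 0, Complex.star_def]
  have e21 : σ 2 1 = (starRingEnd ℂ) (σ 1 2) := by
    rw [← hσ.apply 2 1, Complex.star_def]
  rw [hd0, hd1, hd2, e10, e20, e21] at h3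
  -- off-diagonal vanish
  have hsum : ((Complex.normSq (σ 0 1) + Complex.normSq (σ 0 2) + Complex.normSq (σ 1 2) : ℝ) : ℂ) = 0 := by
    push_cast
    rw [← Complex.mul_conj (σ 0 1), ← Complex.mul_conj (σ 0 2), ← Complex.mul_conj (σ 1 2)]
    linear_combination h3 / 2
  have hr : Complex.normSq (σ 0 1) + Complex.normSq (σ 0 2) + Complex.normSq (σ 1 2) = 0 := by
    exact_mod_cast hsum
  have z01 : σ 0 1 = 0 := Complex.normSq_eq_zero.mp (by
    nlinarith [Complex.normSq_nonneg (σ 0 1), Complex.normSq_nonneg (σ 0 2),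
      Complex.normSq_nonneg (σ 1 2)])
  have z02 : σ 0 2 = 0 := Complex.normSq_eq_zero.mp (by
    nlinarith [Complex.normSq_nonneg (σ 0 1), Complex.normSq_nonneg (σ 0 2),
      Complex.normSq_nonneg (σ 1 2)])
  have z12 : σ 1 2 = 0 := Complex.normSq_eq_zero.mp (by
    nlinarith [Complex.normSq_nonneg (σ 0 1), Complex.normSq_nonneg (σ 0 2),
      Complex.normSq_nonneg (σ 1 2)])
  have hkey : σ = Matrix.diagonal fun i => (d i : ℂ) := by
    ext i j
    fin_cases i <;> fin_cases j <;>
      simp [Matrix.diagonal_apply, hd0, hd1, hd2, z01, z02, z12, e10, e20, e21]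
  refine ⟨hkey, ?_⟩
  rw [hkey, Matrix.diagonal_mul_diagonal, Matrix.diagonal_mul_diagonal]
  simp [mul_comm]
end

section
/- If (ρ, σ) and (ρ₀, σ₀) are pairs of 3×3 density matrices with Tr(ρᵐ) = Tr(ρ₀ᵐ) and Tr(σᵐ) = Tr(σ₀ᵐ) for m = 2, 3, Tr(ρσ) = Tr(ρ₀σ₀), Tr(ρ²σ) = Tr(ρ₀²σ₀), Tr(ρσ²) = Tr(ρ₀σ₀²), and ρ₀σ₀ = σ₀ρ₀, then ρσ = σρ. -/
set_option maxHeartbeats 1000000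

open Matrix ComplexOrder

abbrev M3 := Matrix (Fin 3) (Fin 3) ℂ


lemma mconj_mul {u : M3} (hU1 : star u * u = 1) (X Y : M3) :
    (u * X * star u) * (u * Y * star u) = u * (X * Y) * star u := by
  have h : u * X * star u * (u * Y * star u) = u * (X * ((star u * u) * Y)) * star u := by
    simp only [mul_assoc]
  rw [h, hU1, one_mul]

lemma mconj_inj {u : M3} (hU1 : star u * u = 1) {X Y : M3}
    (h : u * X * star u = u * Y * star u) : X = Y := by
  have key : ∀ Z : M3, star u * (u * Z * star u) * u = Z := by
    intro Z
    have h2 : star u * (u * Z * star u) * u = (star u * u) * Z * (star u * u) := by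
      simp only [mul_assoc]
    rw [h2, hU1, one_mul, mul_one]
  rw [← key X, h, key Y]

lemma mconj_smul {u : M3} (hU2 : u * star u = 1) (c : ℂ) : u * (c • 1) * star u = c • 1 := by
  rw [mul_smul_comm, mul_one, smul_mul_assoc, hU2]

section spec
variable {A : M3} (hA : A.IsHermitian)

lemma spec_exists : ∃ u : M3, star u * u = 1 ∧ u * star u = 1 ∧
    A = u * diagonal (fun i => (hA.eigenvalues i : ℂ)) * star u :=
  ⟨_, Unitary.coe_star_mul_self _, Unitary.coe_mul_star_self _, hA.spectral_theorem⟩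

lemma spec_pow (m : ℕ) : trace (A ^ m) = ((∑ i, hA.eigenvalues i ^ m : ℝ) : ℂ) := by
  obtain ⟨u, hU1, hU2, hdec⟩ := spec_exists hA
  set D : M3 := diagonal (fun i => (hA.eigenvalues i : ℂ)) with hD
  have hpow : A ^ m = u * D ^ m * star u := by
    induction m with
    | zero => simp [hU2]
    | succ k ih =>
      rw [pow_succ, pow_succ, ih]
      conv_lhs => rw [hdec]
      rw [mconj_mul hU1]
  rw [hpow, Matrix.trace_mul_cycle, hU1, Matrix.one_mul, hD,
    Matrix.diagonal_pow, Matrix.trace_diagonal]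
  push_cast
  rfl

lemma spec_two_vals (x y : ℝ)
    (h : ∀ i, hA.eigenvalues i = x ∨ hA.eigenvalues i = y) :
    (A - (x : ℂ) • 1) * (A - (y : ℂ) • 1) = 0 := by
  obtain ⟨u, hU1, hU2, hdec⟩ := spec_exists hA
  set D : M3 := diagonal (fun i => (hA.eigenvalues i : ℂ)) with hD
  have key : ∀ c : ℝ, A - (c : ℂ) • 1 = u * (D - (c : ℂ) • 1) * star u := by
    intro c
    conv_lhs => rw [hdec]
    rw [Matrix.mul_sub, Matrix.sub_mul, mconj_smul hU2]
  rw [key x, key y, mconj_mul hU1]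
  have hzero : (D - (x : ℂ) • 1) * (D - (y : ℂ) • 1) = 0 := by
    rw [hD, smul_one_eq_diagonal, smul_one_eq_diagonal, Matrix.diagonal_sub,
      Matrix.diagonal_sub, Matrix.diagonal_mul_diagonal]
    have hfun : (fun i => ((hA.eigenvalues i : ℂ) - (x : ℂ)) * ((hA.eigenvalues i : ℂ) - (y : ℂ)))
        = fun _ => (0 : ℂ) :=
      funext fun i => by rcases h i with h' | h' <;> simp [h']
    rw [show (diagonal fun i => ((hA.eigenvalues i : ℂ) - (x : ℂ)) * ((hA.eigenvalues i : ℂ) - (y : ℂ))) = diagonal (fun _ => (0:ℂ)) from by rw [hfun], Matrix.diagonal_zero]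
  rw [hzero, Matrix.mul_zero, Matrix.zero_mul]

lemma spec_const (c : ℝ) (h : ∀ i, hA.eigenvalues i = c) : A = (c : ℂ) • 1 := by
  obtain ⟨u, hU1, hU2, hdec⟩ := spec_exists hA
  rw [hdec]
  have hd : diagonal (fun i => (hA.eigenvalues i : ℂ)) = (c : ℂ) • (1 : M3) := by
    rw [smul_one_eq_diagonal]
    have hf : (fun i => (hA.eigenvalues i : ℂ)) = fun _ => (c : ℂ) := funext fun i => by rw [h i]
    rw [hf]
  rw [hd, mconj_smul hU2]
end spec

lemma trace_conj_eq (M : M3) :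
    trace (Mᴴ * M) = ((∑ i, ∑ j, Complex.normSq (M i j) : ℝ) : ℂ) := by
  simp only [trace, diag_apply, Matrix.mul_apply, conjTranspose_apply]
  push_cast
  rw [Finset.sum_comm]
  congr 1; ext i; congr 1; ext j
  rw [Complex.star_def, Complex.normSq_eq_conj_mul_self]

lemma eq_zero_of_trace_conj {M : M3} (h : trace (Mᴴ * M) = 0) : M = 0 := by
  rw [trace_conj_eq] at h
  have h' : (∑ i, ∑ j, Complex.normSq (M i j) : ℝ) = 0 := by exact_mod_cast h
  ext i j
  have hij := (Finset.sum_eq_zero_iff_of_nonneg (fun i _ => Finset.sum_nonneg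
    (fun j _ => Complex.normSq_nonneg _))).1 h' i (Finset.mem_univ i)
  have := (Finset.sum_eq_zero_iff_of_nonneg (fun j _ => Complex.normSq_nonneg _)).1 hij j
    (Finset.mem_univ j)
  simpa [Complex.normSq_eq_zero] using this

lemma trace_conj_nonneg (M : M3) : ∃ s : ℝ, 0 ≤ s ∧ trace (Mᴴ * M) = (s : ℂ) :=
  ⟨_, Finset.sum_nonneg (fun i _ => Finset.sum_nonneg (fun j _ => Complex.normSq_nonneg _)),
    trace_conj_eq M⟩


lemma psum4 (a b : Fin 3 → ℝ)
    (h1 : a 0 + a 1 + a 2 = b 0 + b 1 + b 2)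
    (h2 : a 0 ^ 2 + a 1 ^ 2 + a 2 ^ 2 = b 0 ^ 2 + b 1 ^ 2 + b 2 ^ 2)
    (h3 : a 0 ^ 3 + a 1 ^ 3 + a 2 ^ 3 = b 0 ^ 3 + b 1 ^ 3 + b 2 ^ 3) :
    a 0 ^ 4 + a 1 ^ 4 + a 2 ^ 4 = b 0 ^ 4 + b 1 ^ 4 + b 2 ^ 4 := by
  set pa1 := a 0 + a 1 + a 2
  set pb1 := b 0 + b 1 + b 2
  set pa2 := a 0 ^ 2 + a 1 ^ 2 + a 2 ^ 2
  set pb2 := b 0 ^ 2 + b 1 ^ 2 + b 2 ^ 2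
  set pa3 := a 0 ^ 3 + a 1 ^ 3 + a 2 ^ 3
  linear_combination ((pa1 + pb1) * (pa1 ^ 2 + pb1 ^ 2) / 6 - pb2 * (pa1 + pb1) + (4/3) * (b 0 ^ 3 + b 1 ^ 3 + b 2 ^ 3)) * h1 + ((pa2 + pb2) / 2 - pa1 ^ 2) * h2 + (4/3) * pa1 * h3

lemma proots (a b : Fin 3 → ℝ)
    (h1 : a 0 + a 1 + a 2 = b 0 + b 1 + b 2)
    (h2 : a 0 ^ 2 + a 1 ^ 2 + a 2 ^ 2 = b 0 ^ 2 + b 1 ^ 2 + b 2 ^ 2)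
    (h3 : a 0 ^ 3 + a 1 ^ 3 + a 2 ^ 3 = b 0 ^ 3 + b 1 ^ 3 + b 2 ^ 3) :
    ∀ i, a i = b 0 ∨ a i = b 1 ∨ a i = b 2 := by
  have hprod : ∀ t : ℝ, (t - a 0) * (t - a 1) * (t - a 2) = (t - b 0) * (t - b 1) * (t - b 2) := by
    intro t
    set pa1 := a 0 + a 1 + a 2
    set pb1 := b 0 + b 1 + b 2
    set pb2 := b 0 ^ 2 + b 1 ^ 2 + b 2 ^ 2
    linear_combination (-t ^ 2 + t * (pa1 + pb1) / 2 - (pa1 ^ 2 + pa1 * pb1 + pb1 ^ 2 - 3 * pb2) / 6) * h1 + (-t / 2 + pa1 / 2) * h2 + (-1/3 : ℝ) * h3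
  intro i
  have hz : (a i - b 0) * (a i - b 1) * (a i - b 2) = 0 := by
    rw [← hprod (a i)]
    fin_cases i
    · show (a 0 - a 0) * (a 0 - a 1) * (a 0 - a 2) = 0; ring
    · show (a 1 - a 0) * (a 1 - a 1) * (a 1 - a 2) = 0; ring
    · show (a 2 - a 0) * (a 2 - a 1) * (a 2 - a 2) = 0; ring
  rcases mul_eq_zero.1 hz with hz' | hz'
  · rcases mul_eq_zero.1 hz' with hz'' | hz''
    · exact Or.inl (sub_eq_zero.1 hz'')
    · exact Or.inr (Or.inl (sub_eq_zero.1 hz''))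
  · exact Or.inr (Or.inr (sub_eq_zero.1 hz'))



lemma psum_real {B B₀ : M3} (hB : B.IsHermitian) (hB₀ : B₀.IsHermitian) (m : ℕ)
    (h : trace (B ^ m) = trace (B₀ ^ m)) :
    (∑ i, hB.eigenvalues i ^ m) = ∑ i, hB₀.eigenvalues i ^ m := by
  rw [spec_pow hB, spec_pow hB₀] at h
  exact_mod_cast h

lemma trace_pow_four {B B₀ : M3} (hB : B.IsHermitian) (hB₀ : B₀.IsHermitian)
    (h1 : trace B = trace B₀) (h2 : trace (B ^ 2) = trace (B₀ ^ 2))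
    (h3 : trace (B ^ 3) = trace (B₀ ^ 3)) : trace (B ^ 4) = trace (B₀ ^ 4) := by
  have h1' : trace (B ^ 1) = trace (B₀ ^ 1) := by simpa using h1
  have e1 := psum_real hB hB₀ 1 h1'
  have e2 := psum_real hB hB₀ 2 h2
  have e3 := psum_real hB hB₀ 3 h3
  rw [Fin.sum_univ_three, Fin.sum_univ_three] at e1 e2 e3
  simp only [pow_one] at e1
  have e4 := psum4 hB.eigenvalues hB₀.eigenvalues (by linarith) e2 e3
  rw [spec_pow hB 4, spec_pow hB₀ 4, Fin.sum_univ_three, Fin.sum_univ_three]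
  exact_mod_cast e4

lemma good_case (A B A₀ B₀ : M3) (hA : A.IsHermitian) (hB : B.IsHermitian)
    (hB₀ : B₀.IsHermitian) (α β γ : ℝ)
    (hpoly : A₀ = (α : ℂ) • B₀ ^ 2 + (β : ℂ) • B₀ + (γ : ℂ) • 1)
    (htA1 : trace A = trace A₀) (htA2 : trace (A ^ 2) = trace (A₀ ^ 2))
    (htB1 : trace B = trace B₀) (htB2 : trace (B ^ 2) = trace (B₀ ^ 2))
    (htB3 : trace (B ^ 3) = trace (B₀ ^ 3))
    (htAB : trace (A * B) = trace (A₀ * B₀))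
    (htAB2 : trace (A * B ^ 2) = trace (A₀ * B₀ ^ 2)) :
    A * B = B * A := by
  have htB4 := trace_pow_four hB hB₀ htB1 htB2 htB3
  have expand : ∀ X Y : M3,
      trace ((X - ((α : ℂ) • Y ^ 2 + (β : ℂ) • Y + (γ : ℂ) • 1)) *
        (X - ((α : ℂ) • Y ^ 2 + (β : ℂ) • Y + (γ : ℂ) • 1))) =
      trace (X ^ 2) - 2 * α * trace (X * Y ^ 2) - 2 * β * trace (X * Y) - 2 * γ * trace X
        + α ^ 2 * trace (Y ^ 4) + 2 * α * β * trace (Y ^ 3)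
        + (β ^ 2 + 2 * α * γ) * trace (Y ^ 2) + 2 * β * γ * trace Y + 3 * γ ^ 2 := by
    intro X Y
    have hY4 : Y ^ 2 * Y ^ 2 = Y ^ 4 := by rw [← pow_add]
    have hY3 : Y ^ 2 * Y = Y ^ 3 := by rw [← pow_succ]
    have hY3' : Y * Y ^ 2 = Y ^ 3 := by rw [← pow_succ']
    have hY2 : Y * Y = Y ^ 2 := (pow_two Y).symm
    have hX2 : X * X = X ^ 2 := (pow_two X).symm
    have hflip2 : trace (Y ^ 2 * X) = trace (X * Y ^ 2) := Matrix.trace_mul_comm _ _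
    have hflip1 : trace (Y * X) = trace (X * Y) := Matrix.trace_mul_comm _ _
    simp only [Matrix.sub_mul, Matrix.mul_sub, Matrix.add_mul, Matrix.mul_add,
      smul_mul_assoc, mul_smul_comm, smul_smul, Matrix.mul_one, Matrix.one_mul,
      hY4, hY3, hY3', hY2, hX2, trace_sub, trace_add, trace_smul, hflip2, hflip1,
      Matrix.trace_one, smul_eq_mul, Fintype.card_fin]
    push_cast
    ring
  have hH0 : A₀ - ((α : ℂ) • B₀ ^ 2 + (β : ℂ) • B₀ + (γ : ℂ) • 1) = 0 := sub_eq_zero.2 hpoly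
  have htr : trace ((A - ((α : ℂ) • B ^ 2 + (β : ℂ) • B + (γ : ℂ) • 1)) *
      (A - ((α : ℂ) • B ^ 2 + (β : ℂ) • B + (γ : ℂ) • 1))) = 0 := by
    rw [expand A B, htA1, htA2, htB1, htB2, htB3, htB4, htAB, htAB2, ← expand A₀ B₀, hH0,
      Matrix.zero_mul, trace_zero]
  have hHerm : (A - ((α : ℂ) • B ^ 2 + (β : ℂ) • B + (γ : ℂ) • 1))ᴴ =
      A - ((α : ℂ) • B ^ 2 + (β : ℂ) • B + (γ : ℂ) • 1) := by
    simp [conjTranspose_sub, conjTranspose_add, conjTranspose_smul, conjTranspose_pow,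
      conjTranspose_one, hA.eq, hB.eq, Complex.star_def, Complex.conj_ofReal]
  have hzero : A - ((α : ℂ) • B ^ 2 + (β : ℂ) • B + (γ : ℂ) • 1) = 0 :=
    eq_zero_of_trace_conj (by rw [hHerm]; exact htr)
  have hAeq : A = (α : ℂ) • B ^ 2 + (β : ℂ) • B + (γ : ℂ) • 1 := by
    have := sub_eq_zero.1 hzero; exact this
  rw [hAeq]
  simp only [Matrix.add_mul, Matrix.mul_add, smul_mul_assoc, mul_smul_comm,
    Matrix.one_mul, Matrix.mul_one]
  rw [← pow_succ, ← pow_succ']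



lemma distinct_case {A₀ B₀ : M3} (hA₀ : A₀.IsHermitian) (hB₀ : B₀.IsHermitian)
    (hcomm : A₀ * B₀ = B₀ * A₀)
    (h01 : hB₀.eigenvalues 0 ≠ hB₀.eigenvalues 1)
    (h02 : hB₀.eigenvalues 0 ≠ hB₀.eigenvalues 2)
    (h12 : hB₀.eigenvalues 1 ≠ hB₀.eigenvalues 2) :
    ∃ α β γ : ℝ, A₀ = (α : ℂ) • B₀ ^ 2 + (β : ℂ) • B₀ + (γ : ℂ) • 1 := by
  obtain ⟨u, hU1, hU2, hdec⟩ := spec_exists hB₀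
  set d : Fin 3 → ℝ := hB₀.eigenvalues with hd
  set D : M3 := diagonal (fun i => (d i : ℂ)) with hD
  set M : M3 := star u * A₀ * u with hM
  have hMA : u * M * star u = A₀ := by
    have h2 : u * (star u * A₀ * u) * star u = (u * star u) * A₀ * (u * star u) := by
      simp only [mul_assoc]
    rw [hM, h2, hU2, one_mul, mul_one]
  have hDB : u * D * star u = B₀ := hdec.symm
  have hcomm' : M * D = D * M := by
    apply mconj_inj hU1
    calc u * (M * D) * star u = (u * M * star u) * (u * D * star u) := (mconj_mul hU1 M D).symm
      _ = A₀ * B₀ := by rw [hMA, hDB]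
      _ = B₀ * A₀ := hcomm
      _ = (u * D * star u) * (u * M * star u) := by rw [hMA, hDB]
      _ = u * (D * M) * star u := mconj_mul hU1 D M
  have hdne : ∀ i j : Fin 3, i ≠ j → (d i : ℂ) ≠ (d j : ℂ) := by
    intro i j hij hc
    have hr : d i = d j := by exact_mod_cast hc
    fin_cases i <;> fin_cases j <;>
      first
        | exact hij rfl
        | exact h01 hr
        | exact h02 hr
        | exact h12 hr
        | exact h01 hr.symm
        | exact h02 hr.symm
        | exact h12 hr.symm
  have hMoff : ∀ i j : Fin 3, i ≠ j → M i j = 0 := by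
    intro i j hij
    have h1 : (M * D) i j = M i j * (d j : ℂ) := Matrix.mul_diagonal _ _ _ _
    have h2 : (D * M) i j = (d i : ℂ) * M i j := Matrix.diagonal_mul _ _ _ _
    have h3 : M i j * (d j : ℂ) = (d i : ℂ) * M i j := by rw [← h1, ← h2, hcomm']
    have h4 : M i j * ((d j : ℂ) - (d i : ℂ)) = 0 := by ring_nf; linear_combination h3
    rcases mul_eq_zero.1 h4 with h5 | h5
    · exact h5
    · exact absurd (sub_eq_zero.1 h5).symm (hdne i j hij)
  have hMH : Mᴴ = M := by
    rw [← Matrix.star_eq_conjTranspose, hM, StarMul.star_mul, StarMul.star_mul, star_star,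
      Matrix.star_eq_conjTranspose A₀, hA₀.eq, ← mul_assoc]
  set m : Fin 3 → ℝ := fun i => (M i i).re with hm
  have hmii : ∀ i, M i i = ((m i : ℝ) : ℂ) := by
    intro i
    have := congrFun (congrFun hMH i) i
    rw [Matrix.conjTranspose_apply] at this
    have hre := Complex.conj_eq_iff_re.1 (by simpa using this)
    simpa [hm] using hre.symm
  -- Lagrange interpolation
  set d0 := d 0; set d1 := d 1; set d2 := d 2
  set m0 := m 0; set m1 := m 1; set m2 := m 2
  set α := m0/((d0-d1)*(d0-d2)) + m1/((d1-d0)*(d1-d2)) + m2/((d2-d0)*(d2-d1)) with hα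
  set β := -(m0*(d1+d2)/((d0-d1)*(d0-d2)) + m1*(d0+d2)/((d1-d0)*(d1-d2)) + m2*(d0+d1)/((d2-d0)*(d2-d1))) with hβ
  set γ := m0*d1*d2/((d0-d1)*(d0-d2)) + m1*d0*d2/((d1-d0)*(d1-d2)) + m2*d0*d1/((d2-d0)*(d2-d1)) with hγ
  refine ⟨α, β, γ, ?_⟩
  have hne01 : d0 - d1 ≠ 0 := sub_ne_zero.2 h01
  have hne02 : d0 - d2 ≠ 0 := sub_ne_zero.2 h02
  have hne12 : d1 - d2 ≠ 0 := sub_ne_zero.2 h12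
  have hne10 : d1 - d0 ≠ 0 := sub_ne_zero.2 (Ne.symm h01)
  have hne20 : d2 - d0 ≠ 0 := sub_ne_zero.2 (Ne.symm h02)
  have hne21 : d2 - d1 ≠ 0 := sub_ne_zero.2 (Ne.symm h12)
  have hq : ∀ i : Fin 3, α * d i ^ 2 + β * d i + γ = m i := by
    have hq0 : α * d0 ^ 2 + β * d0 + γ = m0 := by rw [hα, hβ, hγ]; field_simp; ring
    have hq1 : α * d1 ^ 2 + β * d1 + γ = m1 := by rw [hα, hβ, hγ]; field_simp; ring
    have hq2 : α * d2 ^ 2 + β * d2 + γ = m2 := by rw [hα, hβ, hγ]; field_simp; ring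
    intro i
    fin_cases i
    · exact hq0
    · exact hq1
    · exact hq2
  -- assemble
  have hB2 : B₀ ^ 2 = u * (D * D) * star u := by
    rw [pow_two, ← mconj_mul hU1, hDB]
  have hMdiag : M = diagonal (fun i => (α : ℂ) * (d i : ℂ) ^ 2 + (β : ℂ) * (d i : ℂ) + (γ : ℂ)) := by
    ext i j
    by_cases hij : i = j
    · subst hij
      rw [Matrix.diagonal_apply_eq, hmii i, ← hq i]
      push_cast
      ring
    · rw [Matrix.diagonal_apply_ne _ hij, hMoff i j hij]
  have hsm : ∀ (c : ℂ) (X : M3), u * (c • X) * star u = c • (u * X * star u) := by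
    intro c X
    rw [mul_smul_comm, smul_mul_assoc]
  have hlin : ∀ X Y : M3, u * (X + Y) * star u = u * X * star u + u * Y * star u := by
    intro X Y
    rw [Matrix.mul_add, Matrix.add_mul]
  have hDq : (α : ℂ) • (D * D) + (β : ℂ) • D + (γ : ℂ) • 1 =
      diagonal (fun i => (α : ℂ) * (d i : ℂ) ^ 2 + (β : ℂ) * (d i : ℂ) + (γ : ℂ)) := by
    have hDD : D * D = diagonal (fun i => (d i : ℂ) * (d i : ℂ)) := by
      rw [hD, diagonal_mul_diagonal]
    ext i j
    by_cases hij : i = j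
    · subst hij
      simp only [Matrix.add_apply, Matrix.smul_apply, hDD, Matrix.diagonal_apply_eq, hD, diagonal_mul_diagonal,
        Matrix.one_apply_eq, smul_eq_mul]
      ring
    · simp only [Matrix.add_apply, Matrix.smul_apply, hDD, hD, diagonal_mul_diagonal,
        Matrix.diagonal_apply_ne _ hij, Matrix.one_apply_ne hij, smul_eq_mul, mul_zero, add_zero,
        zero_add]
  calc A₀ = u * M * star u := hMA.symm
    _ = u * ((α : ℂ) • (D * D) + (β : ℂ) • D + (γ : ℂ) • 1) * star u := by rw [hMdiag, hDq]
    _ = (α : ℂ) • B₀ ^ 2 + (β : ℂ) • B₀ + (γ : ℂ) • 1 := by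
        rw [hlin, hlin, hsm, hsm, hsm, Matrix.mul_one, hU2, hB2, hDB]



lemma idem_char {R : M3} (hR : R.IsHermitian) (hRR : R * R = R) :
    ∀ i, hR.eigenvalues i = 0 ∨ hR.eigenvalues i = 1 := by
  obtain ⟨u, hU1, hU2, hdec⟩ := spec_exists hR
  set D : M3 := diagonal (fun i => (hR.eigenvalues i : ℂ)) with hD
  have hDD : D * D = D := by
    apply mconj_inj hU1
    calc u * (D * D) * star u = (u * D * star u) * (u * D * star u) := (mconj_mul hU1 D D).symm
      _ = R * R := by rw [← hdec]
      _ = R := hRR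
      _ = u * D * star u := hdec
  intro i
  have h1 : (D * D) i i = D i i := by rw [hDD]
  rw [hD, diagonal_mul_diagonal] at h1
  simp only [Matrix.diagonal_apply_eq] at h1
  have h2 : hR.eigenvalues i * hR.eigenvalues i = hR.eigenvalues i := by exact_mod_cast h1
  have h3 : hR.eigenvalues i * (hR.eigenvalues i - 1) = 0 := by linear_combination h2
  rcases mul_eq_zero.1 h3 with h4 | h4
  · exact Or.inl h4
  · exact Or.inr (by linarith [sub_eq_zero.1 h4])

lemma double_case (A B A₀ B₀ : M3)
    (hA : A.IsHermitian) (hB : B.IsHermitian) (hA₀ : A₀.IsHermitian) (hB₀ : B₀.IsHermitian)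
    (x y u v : ℝ) (hxy : y - x ≠ 0) (huv : u - v ≠ 0)
    (hAe : (A - (x:ℂ) • 1) * (A - (y:ℂ) • 1) = 0)
    (hA₀e : (A₀ - (x:ℂ) • 1) * (A₀ - (y:ℂ) • 1) = 0)
    (htA : trace A = ((2*x + y : ℝ) : ℂ)) (htA₀ : trace A₀ = ((2*x + y : ℝ) : ℂ))
    (hBe : (B - (v:ℂ) • 1) * (B - (u:ℂ) • 1) = 0)
    (hB₀e : (B₀ - (v:ℂ) • 1) * (B₀ - (u:ℂ) • 1) = 0)
    (htB : trace B = ((2*v + u : ℝ) : ℂ)) (htB₀ : trace B₀ = ((2*v + u : ℝ) : ℂ))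
    (hAB : trace (A * B) = trace (A₀ * B₀)) (hcomm : A₀ * B₀ = B₀ * A₀) :
    A * B = B * A := by
  set r : ℝ := (y - x)⁻¹ with hr
  set s : ℝ := (u - v)⁻¹ with hs
  have hyx : ((y : ℂ) - (x : ℂ)) ≠ 0 := by
    rw [show (y:ℂ) - (x:ℂ) = ((y - x : ℝ) : ℂ) by push_cast; ring]
    exact Complex.ofReal_ne_zero.2 hxy
  have huvC : ((u : ℂ) - (v : ℂ)) ≠ 0 := by
    rw [show (u:ℂ) - (v:ℂ) = ((u - v : ℝ) : ℂ) by push_cast; ring]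
    exact Complex.ofReal_ne_zero.2 huv
  have hrw : (r : ℂ) * ((y : ℂ) - (x : ℂ)) = 1 := by
    rw [hr, show ((((y - x)⁻¹ : ℝ)) : ℂ) = ((y:ℂ) - (x:ℂ))⁻¹ by push_cast; ring]
    exact inv_mul_cancel₀ hyx
  have hsw : (s : ℂ) * ((u : ℂ) - (v : ℂ)) = 1 := by
    rw [hs, show ((((u - v)⁻¹ : ℝ)) : ℂ) = ((u:ℂ) - (v:ℂ))⁻¹ by push_cast; ring]
    exact inv_mul_cancel₀ huvC
  -- general facts about the idempotent built from a two-valued hermitian matrix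
  have mkIdem : ∀ (X : M3) (p q : ℝ) (w : ℝ) (hw : (w : ℂ) * ((q:ℂ) - (p:ℂ)) = 1)
      (hXe : (X - (p:ℂ) • 1) * (X - (q:ℂ) • 1) = 0),
      ((w:ℂ) • (X - (p:ℂ) • 1)) * ((w:ℂ) • (X - (p:ℂ) • 1)) = (w:ℂ) • (X - (p:ℂ) • 1) := by
    intro X p q w hw hXe
    have hsq : (X - (p:ℂ) • 1) * (X - (p:ℂ) • 1) = ((q:ℂ) - (p:ℂ)) • (X - (p:ℂ) • 1) := by
      have expand : (X - (p:ℂ) • 1) * (X - (q:ℂ) • 1) =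
          (X - (p:ℂ) • 1) * (X - (p:ℂ) • 1) - ((q:ℂ) - (p:ℂ)) • (X - (p:ℂ) • 1) := by
        simp only [Matrix.mul_sub, Matrix.sub_mul, smul_mul_assoc, mul_smul_comm,
          Matrix.mul_one, Matrix.one_mul, smul_smul, sub_smul, smul_sub]
        module
      rw [expand] at hXe
      have := sub_eq_zero.1 hXe
      linear_combination (norm := module) this
    rw [smul_mul_assoc, mul_smul_comm, hsq, smul_smul, smul_smul]
    congr 1
    linear_combination (w:ℂ) * hw
  set P : M3 := (r:ℂ) • (A - (x:ℂ) • 1) with hP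
  set Q : M3 := (s:ℂ) • (B - (v:ℂ) • 1) with hQ
  set P₀ : M3 := (r:ℂ) • (A₀ - (x:ℂ) • 1) with hP₀
  set Q₀ : M3 := (s:ℂ) • (B₀ - (v:ℂ) • 1) with hQ₀
  have hPP : P * P = P := mkIdem A x y r hrw hAe
  have hQQ : Q * Q = Q := mkIdem B v u s hsw hBe
  have hPP₀ : P₀ * P₀ = P₀ := mkIdem A₀ x y r hrw hA₀e
  have hQQ₀ : Q₀ * Q₀ = Q₀ := mkIdem B₀ v u s hsw hB₀e
  have mkHerm : ∀ (X : M3) (_ : X.IsHermitian) (p w : ℝ),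
      ((w:ℂ) • (X - (p:ℂ) • 1))ᴴ = (w:ℂ) • (X - (p:ℂ) • 1) := by
    intro X hX p w
    simp [conjTranspose_smul, conjTranspose_sub, conjTranspose_one, hX.eq,
      Complex.star_def, Complex.conj_ofReal]
  have hPH : Pᴴ = P := mkHerm A hA x r
  have hQH : Qᴴ = Q := mkHerm B hB v s
  have hP₀H : P₀ᴴ = P₀ := mkHerm A₀ hA₀ x r
  have hQ₀H : Q₀ᴴ = Q₀ := mkHerm B₀ hB₀ v s
  -- traces
  have mkTr : ∀ (X : M3) (p w : ℝ) (t : ℝ) (ht : trace X = ((t : ℝ) : ℂ)),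
      trace ((w:ℂ) • (X - (p:ℂ) • 1)) = (w:ℂ) * ((t:ℂ) - 3*(p:ℂ)) := by
    intro X p w t ht
    rw [trace_smul, trace_sub, trace_smul, ht, Matrix.trace_one]
    simp only [Fintype.card_fin, smul_eq_mul, Nat.cast_ofNat]
    ring
  have htrP : trace P = 1 := by
    rw [hP, mkTr A x r (2*x+y) htA]
    push_cast
    linear_combination hrw
  have htrQ : trace Q = 1 := by
    rw [hQ, mkTr B v s (2*v+u) htB]
    push_cast
    linear_combination hsw
  -- the cross trace equality
  have hexp : ∀ X Y : M3, trace (((r:ℂ) • (X - (x:ℂ) • 1)) * ((s:ℂ) • (Y - (v:ℂ) • 1))) =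
      (r:ℂ) * (s:ℂ) * (trace (X*Y) - (v:ℂ)*trace X - (x:ℂ)*trace Y + 3*(x:ℂ)*(v:ℂ)) := by
    intro X Y
    simp only [smul_mul_assoc, mul_smul_comm, smul_smul, Matrix.sub_mul, Matrix.mul_sub,
      trace_smul, trace_sub, Matrix.mul_one, Matrix.one_mul, Matrix.trace_one,
      Fintype.card_fin, smul_eq_mul]
    push_cast
    ring
  have htau : trace (P * Q) = trace (P₀ * Q₀) := by
    rw [hP, hQ, hP₀, hQ₀, hexp A B, hexp A₀ B₀, htA, htA₀, htB, htB₀, hAB]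
  -- model side: P₀ Q₀ commute and form an idempotent
  have hcPQ₀ : P₀ * Q₀ = Q₀ * P₀ := by
    rw [hP₀, hQ₀]
    simp only [smul_mul_assoc, mul_smul_comm, smul_smul]
    rw [mul_comm (r:ℂ) (s:ℂ)]
    congr 1
    simp only [Matrix.sub_mul, Matrix.mul_sub, smul_mul_assoc, mul_smul_comm,
      Matrix.mul_one, Matrix.one_mul, hcomm]
    module
  have hRH : (P₀ * Q₀).IsHermitian := by
    unfold Matrix.IsHermitian
    rw [conjTranspose_mul, hP₀H, hQ₀H, ← hcPQ₀]
  have hRR : (P₀ * Q₀) * (P₀ * Q₀) = P₀ * Q₀ := by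
    have h1 : (P₀ * Q₀) * (P₀ * Q₀) = P₀ * (Q₀ * P₀) * Q₀ := by
      simp only [mul_assoc]
    rw [h1, ← hcPQ₀, ← mul_assoc, hPP₀, mul_assoc, hQQ₀]
  have hbits := idem_char hRH hRR
  have htrR : trace (P₀ * Q₀) = ((∑ i, hRH.eigenvalues i : ℝ) : ℂ) := by
    have := spec_pow hRH 1
    simpa using this
  -- our side: nonnegativity
  have hSdef := trace_conj_eq (P - Q)
  set S : ℝ := (∑ i, ∑ j, Complex.normSq ((P - Q) i j) : ℝ) with hSd
  have hSnn : 0 ≤ S := Finset.sum_nonneg (fun i _ => Finset.sum_nonneg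
    (fun j _ => Complex.normSq_nonneg _))
  have hPQH : (P - Q)ᴴ = P - Q := by rw [conjTranspose_sub, hPH, hQH]
  have htrS : trace ((P - Q)ᴴ * (P - Q)) = 2 - 2 * trace (P * Q) := by
    rw [hPQH]
    rw [Matrix.sub_mul, Matrix.mul_sub, Matrix.mul_sub, trace_sub, trace_sub, trace_sub,
      hPP, hQQ, Matrix.trace_mul_comm Q P, htrP, htrQ]
    ring
  -- identify k
  have hk : trace (P * Q) = 0 ∨ trace (P * Q) = 1 := by
    have hScomb : (S : ℂ) = 2 - 2 * ((∑ i, hRH.eigenvalues i : ℝ) : ℂ) := by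
      calc (S : ℂ) = trace ((P - Q)ᴴ * (P - Q)) := hSdef.symm
        _ = 2 - 2 * trace (P * Q) := htrS
        _ = 2 - 2 * trace (P₀ * Q₀) := by rw [htau]
        _ = 2 - 2 * ((∑ i, hRH.eigenvalues i : ℝ) : ℂ) := by rw [htrR]
    have hSreal : S = 2 - 2 * (∑ i, hRH.eigenvalues i) := by exact_mod_cast hScomb
    have hsum : (∑ i, hRH.eigenvalues i) = 0 ∨ (∑ i, hRH.eigenvalues i) = 1 := by
      rcases hbits 0 with h0 | h0 <;> rcases hbits 1 with h1 | h1 <;>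
        rcases hbits 2 with h2 | h2 <;>
        rw [Fin.sum_univ_three, h0, h1, h2] at hSreal ⊢ <;>
        [ (left; norm_num); (right; norm_num); (right; norm_num); (exfalso; linarith);
          (right; norm_num); (exfalso; linarith); (exfalso; linarith); (exfalso; linarith) ]
    have hPQt : trace (P * Q) = ((∑ i, hRH.eigenvalues i : ℝ) : ℂ) := htau.trans htrR
    rcases hsum with h | h
    · left; rw [hPQt, h]; norm_num
    · right; rw [hPQt, h]; norm_num
  -- in either case P and Q commute
  have hPQcomm : P * Q = Q * P := by
    rcases hk with hk0 | hk1
    · have hQP : Q * P = 0 := by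
        apply eq_zero_of_trace_conj
        have h1 : (Q * P)ᴴ * (Q * P) = P * (Q * Q) * P := by
          rw [conjTranspose_mul, hPH, hQH]
          simp only [mul_assoc]
        rw [h1, hQQ]
        have h2 : trace (P * Q * P) = trace (P * Q) := by
          rw [Matrix.trace_mul_comm (P * Q) P, ← mul_assoc, hPP]
        rw [h2, hk0]
      have hPQ : P * Q = 0 := by
        have : (Q * P)ᴴ = P * Q := by rw [conjTranspose_mul, hPH, hQH]
        rw [← this, hQP, conjTranspose_zero]
      rw [hPQ, hQP]
    · have hPQ0 : P - Q = 0 := by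
        apply eq_zero_of_trace_conj
        rw [htrS, hk1]
        ring
      have : P = Q := sub_eq_zero.1 hPQ0
      rw [this]
  -- conclude
  have hAeq : A = (x:ℂ) • 1 + ((y:ℂ) - (x:ℂ)) • P := by
    rw [hP, smul_smul, mul_comm, hrw, one_smul]
    abel
  have hBeq : B = (v:ℂ) • 1 + ((u:ℂ) - (v:ℂ)) • Q := by
    rw [hQ, smul_smul, mul_comm, hsw, one_smul]
    abel
  rw [hAeq, hBeq]
  simp only [Matrix.add_mul, Matrix.mul_add, smul_mul_assoc, mul_smul_comm, Matrix.one_mul,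
    Matrix.mul_one, smul_smul, hPQcomm]
  module


lemma double_struct (c : Fin 3 → ℝ) (hnot3 : ¬(c 0 = c 1 ∧ c 0 = c 2))
    (hnotd : ¬(c 0 ≠ c 1 ∧ c 0 ≠ c 2 ∧ c 1 ≠ c 2)) :
    ∃ p q : ℝ, p ≠ q ∧ (∀ i, c i = p ∨ c i = q) ∧ c 0 + c 1 + c 2 = 2*p + q := by
  by_cases h01 : c 0 = c 1
  · have hne : c 0 ≠ c 2 := fun h => hnot3 ⟨h01, h⟩
    refine ⟨c 0, c 2, hne, ?_, by linarith⟩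
    intro i
    fin_cases i
    · exact Or.inl rfl
    · exact Or.inl h01.symm
    · exact Or.inr rfl
  · by_cases h02 : c 0 = c 2
    · refine ⟨c 0, c 1, h01, ?_, by linarith⟩
      intro i
      fin_cases i
      · exact Or.inl rfl
      · exact Or.inr rfl
      · exact Or.inl h02.symm
    · have h12 : c 1 = c 2 := by tauto
      refine ⟨c 1, c 0, fun h => h01 h.symm, ?_, by linarith⟩
      intro i
      fin_cases i
      · exact Or.inr rfl
      · exact Or.inl rfl
      · exact Or.inl h12.symm

theorem stmt13 (ρ σ ρ₀ σ₀ : Matrix (Fin 3) (Fin 3) ℂ)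
    (hρ : ρ.PosSemidef) (htρ : trace ρ = 1)
    (hσ : σ.PosSemidef) (htσ : trace σ = 1)
    (hρ₀ : ρ₀.PosSemidef) (htρ₀ : trace ρ₀ = 1)
    (hσ₀ : σ₀.PosSemidef) (htσ₀ : trace σ₀ = 1)
    (h2ρ : trace (ρ ^ 2) = trace (ρ₀ ^ 2))
    (h3ρ : trace (ρ ^ 3) = trace (ρ₀ ^ 3))
    (h2σ : trace (σ ^ 2) = trace (σ₀ ^ 2))
    (h3σ : trace (σ ^ 3) = trace (σ₀ ^ 3))
    (h12 : trace (ρ * σ) = trace (ρ₀ * σ₀))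
    (h112 : trace (ρ ^ 2 * σ) = trace (ρ₀ ^ 2 * σ₀))
    (h122 : trace (ρ * σ ^ 2) = trace (ρ₀ * σ₀ ^ 2))
    (hcomm : ρ₀ * σ₀ = σ₀ * ρ₀) :
    ρ * σ = σ * ρ := by
  have hρH : ρ.IsHermitian := hρ.1
  have hσH : σ.IsHermitian := hσ.1
  have hρ₀H : ρ₀.IsHermitian := hρ₀.1
  have hσ₀H : σ₀.IsHermitian := hσ₀.1
  set a' : Fin 3 → ℝ := hρH.eigenvalues with ha'
  set b' : Fin 3 → ℝ := hσH.eigenvalues with hb'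
  set a : Fin 3 → ℝ := hρ₀H.eigenvalues with ha
  set b : Fin 3 → ℝ := hσ₀H.eigenvalues with hb
  have h1ρ : trace ρ = trace ρ₀ := by rw [htρ, htρ₀]
  have h1σ : trace σ = trace σ₀ := by rw [htσ, htσ₀]
  have h1ρ' : trace (ρ ^ 1) = trace (ρ₀ ^ 1) := by simpa using h1ρ
  have h1σ' : trace (σ ^ 1) = trace (σ₀ ^ 1) := by simpa using h1σ
  have ea1 := psum_real hρH hρ₀H 1 h1ρ'
  have ea2 := psum_real hρH hρ₀H 2 h2ρ
  have ea3 := psum_real hρH hρ₀H 3 h3ρ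
  have eb1 := psum_real hσH hσ₀H 1 h1σ'
  have eb2 := psum_real hσH hσ₀H 2 h2σ
  have eb3 := psum_real hσH hσ₀H 3 h3σ
  rw [Fin.sum_univ_three, Fin.sum_univ_three] at ea1 ea2 ea3 eb1 eb2 eb3
  simp only [pow_one] at ea1 eb1
  have hra := proots a' a ea1 ea2 ea3
  have hrb := proots b' b eb1 eb2 eb3
  -- trace of model matrices in terms of eigenvalue sums
  have htra : trace ρ₀ = ((a 0 + a 1 + a 2 : ℝ) : ℂ) := by
    have := spec_pow hρ₀H 1
    rw [pow_one, Fin.sum_univ_three] at this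
    simpa using this
  have htrb : trace σ₀ = ((b 0 + b 1 + b 2 : ℝ) : ℂ) := by
    have := spec_pow hσ₀H 1
    rw [pow_one, Fin.sum_univ_three] at this
    simpa using this
  by_cases hb3 : b 0 = b 1 ∧ b 0 = b 2
  · -- σ₀ is scalar, hence so is σ
    have hσc : σ = ((b 0 : ℝ) : ℂ) • 1 := by
      apply spec_const hσH
      intro i
      rcases hrb i with h | h | h
      · exact h
      · exact h.trans hb3.1.symm
      · exact h.trans hb3.2.symm
    rw [hσc]
    simp [mul_smul_comm, smul_mul_assoc]
  by_cases ha3 : a 0 = a 1 ∧ a 0 = a 2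
  · have hρc : ρ = ((a 0 : ℝ) : ℂ) • 1 := by
      apply spec_const hρH
      intro i
      rcases hra i with h | h | h
      · exact h
      · exact h.trans ha3.1.symm
      · exact h.trans ha3.2.symm
    rw [hρc]
    simp [mul_smul_comm, smul_mul_assoc]
  by_cases hbd : b 0 ≠ b 1 ∧ b 0 ≠ b 2 ∧ b 1 ≠ b 2
  · obtain ⟨α, β, γ, hpoly⟩ := distinct_case hρ₀H hσ₀H hcomm hbd.1 hbd.2.1 hbd.2.2
    exact good_case ρ σ ρ₀ σ₀ hρH hσH hσ₀H α β γ hpoly h1ρ h2ρ h1σ h2σ h3σ h12 h122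
  by_cases had : a 0 ≠ a 1 ∧ a 0 ≠ a 2 ∧ a 1 ≠ a 2
  · obtain ⟨α, β, γ, hpoly⟩ := distinct_case hσ₀H hρ₀H hcomm.symm had.1 had.2.1 had.2.2
    have h12' : trace (σ * ρ) = trace (σ₀ * ρ₀) := by
      rw [Matrix.trace_mul_comm σ ρ, Matrix.trace_mul_comm σ₀ ρ₀]; exact h12
    have h112' : trace (σ * ρ ^ 2) = trace (σ₀ * ρ₀ ^ 2) := by
      rw [Matrix.trace_mul_comm σ (ρ^2), Matrix.trace_mul_comm σ₀ (ρ₀^2)]; exact h112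
    exact (good_case σ ρ σ₀ ρ₀ hσH hρH hρ₀H α β γ hpoly h1σ h2σ h1ρ h2ρ h3ρ h12' h112').symm
  -- both are double
  obtain ⟨x, y, hxy, hmema, hsuma⟩ := double_struct a ha3 had
  obtain ⟨v, u, hvu, hmemb, hsumb⟩ := double_struct b hb3 hbd
  have compa : ∀ (z : ℝ) (j : Fin 3), z = a j → (z = x ∨ z = y) := by
    intro z j hz
    rcases hmema j with h' | h'
    · exact Or.inl (hz.trans h')
    · exact Or.inr (hz.trans h')
  have hmema' : ∀ i, a' i = x ∨ a' i = y := by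
    intro i
    rcases hra i with h | h | h
    · exact compa _ 0 h
    · exact compa _ 1 h
    · exact compa _ 2 h
  have compb : ∀ (z : ℝ) (j : Fin 3), z = b j → (z = v ∨ z = u) := by
    intro z j hz
    rcases hmemb j with h' | h'
    · exact Or.inl (hz.trans h')
    · exact Or.inr (hz.trans h')
  have hmemb' : ∀ i, b' i = v ∨ b' i = u := by
    intro i
    rcases hrb i with h | h | h
    · exact compb _ 0 h
    · exact compb _ 1 h
    · exact compb _ 2 h
  have htA₀ : trace ρ₀ = ((2*x + y : ℝ) : ℂ) := by rw [htra, hsuma]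
  have htA : trace ρ = ((2*x + y : ℝ) : ℂ) := by rw [h1ρ, htA₀]
  have htB₀ : trace σ₀ = ((2*v + u : ℝ) : ℂ) := by rw [htrb, hsumb]
  have htB : trace σ = ((2*v + u : ℝ) : ℂ) := by rw [h1σ, htB₀]
  exact double_case ρ σ ρ₀ σ₀ hρH hσH hρ₀H hσ₀H x y u v
    (sub_ne_zero.2 (Ne.symm hxy)) (sub_ne_zero.2 (Ne.symm hvu))
    (spec_two_vals hρH x y hmema') (spec_two_vals hρ₀H x y hmema)
    htA htA₀
    (spec_two_vals hσH v u hmemb') (spec_two_vals hσ₀H v u hmemb)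
    htB htB₀ h12 hcomm
end
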